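/- For the generalized exponential sampling series of F⁰_π(x) = ½ sinc²(½ log x) with the Mellin–Jackson kernel J_{1,2}(u) = C sinc⁴((log u)/(4π)), the truncation error (T_{w,N} f)(x) = (C/2) ∑_{|k| ≥ N+1} sinc²(k/(2w)) sinc⁴((w log x − k)/(4π)) satisfies, for N ≥ 2 max{1, |w log x|}: |(T_{w,N} f)(x)| ≤ R w² ∑_{k ≥ N+1} k^{-6} = O(N^{-5}) as N → ∞, with constant depending on w. -/

import Mathlib

open Real

/-- `sinc u = sin(πu)/(πu)`, `sinc 0 = 1`. -/
noncomputable def sinc (u : ℝ) : ℝ :=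
  if u = 0 then 1 else Real.sin (π * u) / (π * u)

lemma abs_sinc_le_inv (u : ℝ) (hu : u ≠ 0) : |_root_.sinc u| ≤ (π * |u|)⁻¹ := by
  rw [_root_.sinc, if_neg hu, abs_div, abs_mul, abs_of_pos pi_pos, div_eq_mul_inv]
  have h1 : |Real.sin (π * u)| ≤ 1 := abs_le.mpr ⟨neg_one_le_sin _, sin_le_one _⟩
  have h2 : (0:ℝ) ≤ (π * |u|)⁻¹ := by positivity
  calc |Real.sin (π * u)| * (π * |u|)⁻¹ ≤ 1 * (π * |u|)⁻¹ :=
        mul_le_mul_of_nonneg_right h1 h2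
    _ = (π * |u|)⁻¹ := one_mul _

lemma term_bound (w L : ℝ) (hw : 0 < w) (k : ℤ) (a : ℝ) (ha : |((k:ℤ):ℝ)| = a)
    (ha1 : 1 ≤ a) (hL : 2 * |L| ≤ a) :
    |_root_.sinc (((k:ℤ):ℝ) / (2*w)) ^ 2 * _root_.sinc ((L - ((k:ℤ):ℝ)) / (4*π)) ^ 4|
      ≤ 16384 / π ^ 2 * w ^ 2 * (a ^ 6)⁻¹ := by
  have ha0 : 0 < a := lt_of_lt_of_le one_pos ha1
  have hd : a / 2 ≤ |L - ((k:ℤ):ℝ)| := by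
    have h1 : |((k:ℤ):ℝ)| - |L| ≤ |((k:ℤ):ℝ) - L| := abs_sub_abs_le_abs_sub _ _
    rw [abs_sub_comm] at h1
    linarith
  have hdpos : 0 < |L - ((k:ℤ):ℝ)| := lt_of_lt_of_le (by linarith) hd
  have hu1 : ((k:ℤ):ℝ) / (2*w) ≠ 0 := by
    intro h
    rw [div_eq_zero_iff] at h
    rcases h with h | h
    · rw [h] at ha; simp at ha; linarith
    · linarith
  have hu2 : (L - ((k:ℤ):ℝ)) / (4*π) ≠ 0 := by
    intro h
    rw [div_eq_zero_iff] at h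
    rcases h with h | h
    · rw [h] at hdpos; simp at hdpos
    · have := pi_pos; linarith
  have hb1 : |_root_.sinc (((k:ℤ):ℝ) / (2*w))| ≤ 2*w/(π*a) := by
    refine (abs_sinc_le_inv _ hu1).trans_eq ?_
    rw [abs_div, ha, abs_of_pos (by linarith : (0:ℝ) < 2*w)]
    have hπ := pi_pos
    field_simp
  have hb2 : |_root_.sinc ((L - ((k:ℤ):ℝ)) / (4*π))| ≤ 8/a := by
    refine (abs_sinc_le_inv _ hu2).trans ?_
    have hπ := pi_pos
    rw [abs_div, abs_of_pos (by linarith : (0:ℝ) < 4*π)]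
    have he : (π * (|L - ((k:ℤ):ℝ)| / (4*π)))⁻¹ = 4 / |L - ((k:ℤ):ℝ)| := by
      field_simp
    rw [he, div_le_div_iff₀ hdpos ha0]
    linarith
  have h1 : |_root_.sinc (((k:ℤ):ℝ) / (2*w)) ^ 2 * _root_.sinc ((L - ((k:ℤ):ℝ)) / (4*π)) ^ 4|
      = |_root_.sinc (((k:ℤ):ℝ) / (2*w))| ^ 2 * |_root_.sinc ((L - ((k:ℤ):ℝ)) / (4*π))| ^ 4 := by
    rw [abs_mul, abs_pow, abs_pow]
  rw [h1]
  have hb1' : |_root_.sinc (((k:ℤ):ℝ) / (2*w))| ^ 2 ≤ (2*w/(π*a)) ^ 2 := by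
    exact pow_le_pow_left₀ (abs_nonneg _) hb1 2
  have hb2' : |_root_.sinc ((L - ((k:ℤ):ℝ)) / (4*π))| ^ 4 ≤ (8/a) ^ 4 := by
    exact pow_le_pow_left₀ (abs_nonneg _) hb2 4
  calc |_root_.sinc (((k:ℤ):ℝ) / (2*w))| ^ 2 * |_root_.sinc ((L - ((k:ℤ):ℝ)) / (4*π))| ^ 4
      ≤ (2*w/(π*a)) ^ 2 * (8/a) ^ 4 := by
        apply mul_le_mul hb1' hb2' (by positivity) (by positivity)
    _ = 16384 / π ^ 2 * w ^ 2 * (a ^ 6)⁻¹ := by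
        have hπ := pi_pos
        field_simp
        ring

lemma tele_bound (a : ℝ) (ha : 2 ≤ a) :
    ((a+1) ^ 6)⁻¹ ≤ (5 * a ^ 5)⁻¹ - (5 * (a+1) ^ 5)⁻¹ := by
  have ha0 : (0:ℝ) < a := by linarith
  have hb : (0:ℝ) < a + 1 := by linarith
  have h5 : (5 * a ^ 5)⁻¹ - (5 * (a+1) ^ 5)⁻¹
      = ((a+1) ^ 5 - a ^ 5) / (5 * a ^ 5 * (a+1) ^ 5) := by
    field_simp
  rw [h5, inv_eq_one_div, div_le_div_iff₀ (by positivity) (by positivity)]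
  have key : 5 * a ^ 5 ≤ ((a+1) ^ 5 - a ^ 5) * (a+1) := by nlinarith [pow_nonneg ha0.le 2, pow_nonneg ha0.le 3, pow_nonneg ha0.le 4, ha0.le]
  nlinarith [mul_le_mul_of_nonneg_right key (pow_nonneg hb.le 5)]

lemma tail_sum_le (N : ℕ) (hN : (2:ℝ) ≤ (N:ℝ)) :
    ∑' k : ℕ, (((N:ℝ) + 1 + (k:ℝ)) ^ 6)⁻¹ ≤ (((N:ℝ)) ^ 5)⁻¹ := by
  have hN0 : (0:ℝ) < (N:ℝ) := by linarith
  apply Real.tsum_le_of_sum_range_le (fun n => by positivity)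
  intro n
  set d : ℕ → ℝ := fun i => (5 * ((N:ℝ) + i) ^ 5)⁻¹ with hd
  have hdn : ∀ i : ℕ, 0 ≤ d i := by
    intro i
    have : (0:ℝ) < (N:ℝ) + i := by positivity
    positivity
  calc ∑ i ∈ Finset.range n, (((N:ℝ) + 1 + (i:ℝ)) ^ 6)⁻¹
      ≤ ∑ i ∈ Finset.range n, (d i - d (i+1)) := by
        apply Finset.sum_le_sum
        intro i _
        have h1 : ((N:ℝ) + 1 + i) = ((N:ℝ) + i) + 1 := by ring
        have h2 : d (i+1) = (5 * (((N:ℝ) + i) + 1) ^ 5)⁻¹ := by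
          simp only [hd]
          push_cast
          ring_nf
        rw [h1, h2, hd]
        exact tele_bound ((N:ℝ) + i) (by nlinarith [Nat.cast_nonneg (α := ℝ) i])
    _ = d 0 - d n := Finset.sum_range_sub' d n
    _ ≤ d 0 := by linarith [hdn n]
    _ ≤ (((N:ℝ)) ^ 5)⁻¹ := by
        simp only [hd, Nat.cast_zero, add_zero]
        rw [inv_le_inv₀ (by positivity) (by positivity)]
        nlinarith [pow_pos hN0 5]

set_option maxHeartbeats 1000000 in
/-- Truncation-error estimate for the generalized exponential sampling series of
`F⁰_π` with the Mellin–Jackson kernel `J_{1,2}(u) = C sinc⁴((log u)/(4π))`: for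
`N ≥ 2 max{1, |w log x|}` the tail is at most `R w² ∑_{k ≥ N+1} k⁻⁶ = O(N⁻⁵)`. -/
theorem truncation_error_Jackson (C : ℝ)
    (hC : C⁻¹ = ∫ u in Set.Ioi (0:ℝ), _root_.sinc (Real.log u / (4 * π)) ^ 4 / u) :
    ∃ R > (0:ℝ), ∀ w > (0:ℝ), ∀ x > (0:ℝ), ∀ N : ℕ,
      2 * max 1 |w * Real.log x| ≤ (N : ℝ) →
      |C / 2 * ∑' k : {k : ℤ // (N : ℤ) + 1 ≤ |k|},
          _root_.sinc (((k : ℤ) : ℝ) / (2 * w)) ^ 2 *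
            _root_.sinc ((w * Real.log x - ((k : ℤ) : ℝ)) / (4 * π)) ^ 4|
        ≤ R * w ^ 2 * ∑' k : ℕ, (((N : ℝ) + 1 + (k : ℝ)) ^ 6)⁻¹ ∧
      |C / 2 * ∑' k : {k : ℤ // (N : ℤ) + 1 ≤ |k|},
          _root_.sinc (((k : ℤ) : ℝ) / (2 * w)) ^ 2 *
            _root_.sinc ((w * Real.log x - ((k : ℤ) : ℝ)) / (4 * π)) ^ 4|
        ≤ R * w ^ 2 * (((N : ℝ)) ^ 5)⁻¹ := by
  have hπ := pi_pos
  refine ⟨|C| * (16384 / π ^ 2) + 1, by positivity, ?_⟩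
  intro w hw x hx N hN
  set L : ℝ := w * Real.log x with hLdef
  set K : ℝ := 16384 / π ^ 2 with hKdef
  have hK0 : 0 < K := by positivity
  have hN2 : (2:ℝ) ≤ (N:ℝ) := by
    have h1 : (1:ℝ) ≤ max 1 |L| := le_max_left _ _
    linarith
  have hLN : 2 * |L| ≤ (N:ℝ) := by
    have h1 : |L| ≤ max 1 |L| := le_max_right _ _
    linarith
  set t : ℤ → ℝ := fun k =>
    _root_.sinc (((k:ℤ):ℝ) / (2 * w)) ^ 2 * _root_.sinc ((L - ((k:ℤ):ℝ)) / (4 * π)) ^ 4 with htdef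
  set s : Set ℤ := {k : ℤ | (N : ℤ) + 1 ≤ |k|} with hsdef
  set H : ℤ → ℝ := fun k =>
    if (N : ℤ) + 1 ≤ |k| then K * w ^ 2 * (|((k:ℤ):ℝ)| ^ 6)⁻¹ else 0 with hHdef
  -- termwise bound
  have hFH : ∀ k : ℤ, |s.indicator t k| ≤ H k := by
    intro k
    by_cases hk : (N : ℤ) + 1 ≤ |k|
    · rw [Set.indicator_of_mem (show k ∈ s from hk) t]
      simp only [hHdef]
      simp only [if_pos hk]
      have hka : (N:ℝ) + 1 ≤ |((k:ℤ):ℝ)| := by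
        rw [← Int.cast_abs]
        exact_mod_cast hk
      have := term_bound w L hw k |((k:ℤ):ℝ)| rfl (by linarith) (by linarith)
      simpa [htdef, hKdef] using this
    · rw [Set.indicator_of_notMem (show k ∉ s from hk) t]
      simp only [hHdef]
      simp only [if_neg hk, abs_zero, le_refl]
  have hH0 : ∀ k : ℤ, 0 ≤ H k := fun k => le_trans (abs_nonneg _) (hFH k)
  -- summability of H on ℕ
  have hc : Summable (fun n : ℕ => K * w ^ 2 * (((n:ℝ)) ^ 6)⁻¹) :=
    (Real.summable_nat_pow_inv.mpr (by norm_num)).mul_left _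
  have hnat : Summable (fun n : ℕ => H (n : ℤ)) := by
    apply Summable.of_nonneg_of_le (fun n => hH0 _) _ hc
    intro n
    simp only [hHdef]
    by_cases hn : (N : ℤ) + 1 ≤ |(n:ℤ)|
    · simp only [if_pos hn]
      have : |(((n:ℤ)):ℝ)| = (n:ℝ) := by
        push_cast; exact abs_of_nonneg (Nat.cast_nonneg n)
      rw [this]
    · simp only [if_neg hn]
      positivity
  have hsymm : ∀ n : ℕ, H (-(n:ℤ)) = H (n:ℤ) := by
    intro n
    simp only [hHdef]
    simp [abs_neg]
  have hneg : Summable (fun n : ℕ => H (-(n:ℤ))) := hnat.congr fun n => (hsymm n).symm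
  have hHsum : Summable H := Summable.of_nat_of_neg hnat hneg
  have hFsum' : Summable (fun k : ℤ => |s.indicator t k|) :=
    Summable.of_nonneg_of_le (fun k => abs_nonneg _) hFH hHsum
  have hFsum : Summable (s.indicator t) := summable_abs_iff.mp hFsum'
  -- the subtype sum equals the indicator sum
  have hsub : ∑' k : {k : ℤ // (N : ℤ) + 1 ≤ |k|}, t k = ∑' k : ℤ, s.indicator t k :=
    tsum_subtype s t
  -- H 0 = 0
  have hH00 : H 0 = 0 := by
    simp only [hHdef]
    simp only [abs_zero]
    rw [if_neg (by omega)]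
  -- value of tsum of H on ℕ
  set T : ℝ := ∑' k : ℕ, (((N : ℝ) + 1 + (k : ℝ)) ^ 6)⁻¹ with hTdef
  have hT0 : 0 ≤ T := tsum_nonneg (fun k => by positivity)
  have hshift : ∀ n : ℕ, H ((n + (N + 1) : ℕ) : ℤ) = K * w ^ 2 * (((N:ℝ) + 1 + (n:ℝ)) ^ 6)⁻¹ := by
    intro n
    simp only [hHdef]
    have h1 : (N : ℤ) + 1 ≤ |((n + (N + 1) : ℕ) : ℤ)| := by
      rw [Int.abs_eq_natAbs]
      omega
    rw [if_pos h1]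
    have h2 : |(((n + (N + 1) : ℕ) : ℤ) : ℝ)| = (N:ℝ) + 1 + (n:ℝ) := by
      push_cast
      rw [abs_of_nonneg (by positivity)]
      ring
    rw [h2]
  have hnatval : ∑' n : ℕ, H (n : ℤ) = K * w ^ 2 * T := by
    have h1 := Summable.sum_add_tsum_nat_add (f := fun n : ℕ => H (n : ℤ)) (N + 1) hnat
    have h2 : ∑ i ∈ Finset.range (N + 1), H (i : ℤ) = 0 := by
      apply Finset.sum_eq_zero
      intro i hi
      rw [Finset.mem_range] at hi
      simp only [hHdef]
      rw [if_neg (by rw [Int.abs_eq_natAbs]; omega)]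
    have h3 : ∑' n : ℕ, H ((n + (N + 1) : ℕ) : ℤ) = K * w ^ 2 * T := by
      rw [hTdef, ← tsum_mul_left]
      exact tsum_congr hshift
    rw [← h1, h2, zero_add]
    exact_mod_cast h3
  have hHval : ∑' k : ℤ, H k = 2 * (K * w ^ 2 * T) := by
    rw [Summable.tsum_of_nat_of_neg hnat hneg, hH00, hnatval]
    have : ∑' n : ℕ, H (-(n:ℤ)) = K * w ^ 2 * T := by
      rw [← hnatval]
      exact tsum_congr hsymm
    rw [this]
    ring
  -- main bound
  have hmain : |∑' k : {k : ℤ // (N : ℤ) + 1 ≤ |k|}, t k| ≤ 2 * (K * w ^ 2 * T) := by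
    rw [hsub, ← hHval]
    have habs : |∑' k : ℤ, s.indicator t k| ≤ ∑' k : ℤ, |s.indicator t k| := by
      have := norm_tsum_le_tsum_norm (f := s.indicator t)
        (by simpa only [Real.norm_eq_abs] using hFsum')
      simpa only [Real.norm_eq_abs] using this
    exact habs.trans (Summable.tsum_le_tsum hFH hFsum' hHsum)
  have hgoal1 : |C / 2 * ∑' k : {k : ℤ // (N : ℤ) + 1 ≤ |k|}, t k|
      ≤ (|C| * K + 1) * w ^ 2 * T := by
    rw [abs_mul]
    have h1 : |C / 2| = |C| / 2 := by rw [abs_div]; norm_num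
    rw [h1]
    calc |C| / 2 * |∑' k : {k : ℤ // (N : ℤ) + 1 ≤ |k|}, t k|
        ≤ |C| / 2 * (2 * (K * w ^ 2 * T)) := by
          apply mul_le_mul_of_nonneg_left hmain (by positivity)
      _ = |C| * K * (w ^ 2 * T) := by ring
      _ ≤ (|C| * K + 1) * (w ^ 2 * T) := by
          apply mul_le_mul_of_nonneg_right _ (by positivity)
          linarith
      _ = (|C| * K + 1) * w ^ 2 * T := by ring
  refine ⟨hgoal1, ?_⟩
  calc |C / 2 * ∑' k : {k : ℤ // (N : ℤ) + 1 ≤ |k|}, t k|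
      ≤ (|C| * K + 1) * w ^ 2 * T := hgoal1
    _ ≤ (|C| * K + 1) * w ^ 2 * (((N:ℝ)) ^ 5)⁻¹ := by
        apply mul_le_mul_of_nonneg_left (tail_sum_le N hN2) (by positivity)
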